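/- Let (A_n)_{n ∈ ℕ} be a sequence of nonempty compact subsets of ℝ^d that is decreasing with respect to inclusion (A_{n+1} ⊆ A_n for all n). If there exists a real number r ≥ 0 such that r ≤ reach(A_n) for all n ∈ ℕ, then r ≤ reach(⋂_{n ∈ ℕ} A_n). -/

import Mathlib

open Metric Set ENNReal

/-- The reach of a set `X`: the supremum of all `r ≥ 0` such that every point `y`
with `dist (y, X) < r` has a unique nearest point in `X`. -/
noncomputable def reach {d : ℕ} (X : Set (EuclideanSpace ℝ (Fin d))) : ℝ≥0∞ :=
  sSup {r : ℝ≥0∞ | ∀ y : EuclideanSpace ℝ (Fin d),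
    ENNReal.ofReal (Metric.infDist y X) < r →
      ∃! x, x ∈ X ∧ ∀ x' ∈ X, dist y x ≤ dist y x'}

open Filter
set_option maxHeartbeats 1000000
variable {E : Type*} [NormedAddCommGroup E] [InnerProductSpace ℝ E] [ProperSpace E]

/-- Continuity of the (unique) nearest-point projection at a point where it is unique. -/
lemma proj_cont' (X : Set E) (hX : IsCompact X) (c b : E)
    (huniq : ∀ b', b' ∈ X → (∀ a ∈ X, dist c b' ≤ dist c a) → b' = b)
    (ε : ℝ) (hε : 0 < ε) :
    ∃ η₀ > 0, ∀ c' : E, dist c' c ≤ η₀ → ∀ b' ∈ X, dist c' b' = infDist c' X →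
      dist b' b ≤ ε := by
  by_contra hcon
  push_neg at hcon
  have hstep : ∀ k : ℕ, ∃ c' : E, dist c' c ≤ 1/((k:ℝ)+1) ∧ ∃ b' ∈ X,
      dist c' b' = infDist c' X ∧ ε < dist b' b := by
    intro k
    obtain ⟨c', h1, b', h2, h3, h4⟩ := hcon (1/((k:ℝ)+1)) (by positivity)
    exact ⟨c', h1, b', h2, h3, h4⟩
  choose cs hcs bs hbsX hbs hbsfar using hstep
  obtain ⟨β, hβX, φ, hφ, hβ⟩ := hX.tendsto_subseq hbsX
  have hcs' : Tendsto (cs ∘ φ) atTop (nhds c) := by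
    rw [tendsto_iff_dist_tendsto_zero]
    refine squeeze_zero (fun k => dist_nonneg) (fun k => ?_) tendsto_one_div_add_atTop_nhds_zero_nat
    calc dist (cs (φ k)) c ≤ 1/((φ k : ℝ)+1) := hcs (φ k)
    _ ≤ 1/((k:ℝ)+1) := by
        apply one_div_le_one_div_of_le (by positivity)
        have hk : k ≤ φ k := hφ.le_apply
        push_cast
        exact add_le_add (Nat.cast_le.mpr hk) le_rfl
  have hd1 : Tendsto (fun k => dist (cs (φ k)) (bs (φ k))) atTop (nhds (dist c β)) :=
    hcs'.dist hβ
  have hd2 : Tendsto (fun k => infDist (cs (φ k)) X) atTop (nhds (infDist c X)) :=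
    ((continuous_infDist_pt X).tendsto c).comp hcs'
  have heq : dist c β = infDist c X := by
    have : (fun k => dist (cs (φ k)) (bs (φ k))) = (fun k => infDist (cs (φ k)) X) := by
      funext k; exact hbs (φ k)
    rw [this] at hd1
    exact tendsto_nhds_unique hd1 hd2
  have hβmin : ∀ a ∈ X, dist c β ≤ dist c a := by
    intro a ha
    rw [heq]
    exact infDist_le_dist_of_mem ha
  have : β = b := huniq β hβX hβmin
  have hfar : ε ≤ dist β b := by
    have : Tendsto (fun k => dist (bs (φ k)) b) atTop (nhds (dist β b)) := hβ.dist tendsto_const_nhds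
    exact ge_of_tendsto this (Eventually.of_forall (fun k => (hbsfar (φ k)).le))
  rw [this] at hfar
  simp at hfar
  linarith


lemma sup_infDist (A : ℕ → Set E) (hc : ∀ n, IsCompact (A n)) (hne : ∀ n, (A n).Nonempty)
    (hdec : ∀ n, A (n + 1) ⊆ A n) (y : E) (ε : ℝ) (hε : 0 < ε) :
    ∃ n, infDist y (⋂ m, A m) - ε < infDist y (A n) := by
  have hmono : Antitone A := antitone_nat_of_succ_le hdec
  by_contra hcon
  push_neg at hcon
  -- hcon : ∀ n, infDist y (A n) ≤ infDist y (⋂ m, A m) - ε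
  have hstep : ∀ n : ℕ, ∃ a ∈ A n, infDist y (A n) = dist y a :=
    fun n => (hc n).exists_infDist_eq_dist (hne n) y
  choose as hasA hasd using hstep
  have hA0 : ∀ n, as n ∈ A 0 := fun n => hmono (Nat.zero_le n) (hasA n)
  obtain ⟨l, _, φ, hφ, hl⟩ := (hc 0).tendsto_subseq hA0
  have hlmem : l ∈ ⋂ m, A m := by
    rw [mem_iInter]
    intro m
    refine (hc m).isClosed.mem_of_tendsto hl ?_
    filter_upwards [eventually_ge_atTop m] with k hk
    exact hmono (le_trans hk (hφ.le_apply)) (hasA (φ k))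
  have hdl : dist y l ≤ infDist y (⋂ m, A m) - ε := by
    have h1 : Tendsto (fun k => dist y (as (φ k))) atTop (nhds (dist y l)) :=
      tendsto_const_nhds.dist hl
    refine le_of_tendsto h1 (Eventually.of_forall fun k => ?_)
    rw [← hasd (φ k)]
    exact hcon (φ k)
  have := infDist_le_dist_of_mem hlmem (x := y)
  linarith


lemma key (X Aset : Set E) (hX : IsCompact X) (hXne : X.Nonempty) (hAX : Aset ⊆ X)
    (r δ δn T' : ℝ) (y z₁ z₂ : E)
    (hδn : infDist y X = δn) (hδnpos : 0 < δn) (hδnδ : δn ≤ δ)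
    (hT'pos : 0 < T') (hT'4 : T' < 4 * δn) (hT'r : 2 * T' < r - δn)
    (huniq : ∀ c : E, infDist c X < r →
      ∃! b, b ∈ X ∧ ∀ a ∈ X, dist c b ≤ dist c a)
    (hz₁ : z₁ ∈ Aset) (hz₂ : z₂ ∈ Aset) (hdz₁ : dist y z₁ = δ) (hdz₂ : dist y z₂ = δ) :
    dist z₁ z₂ ^ 2 ≤ 4 * ((δ - δn) * (2 * δ + δ * (δ + δn) / T')) := by
  have h2T : (0:ℝ) < 2 * T' := by positivity
  have hcont : Continuous (fun c : E => infDist c X - ‖c - y‖ ^ 2 / (2 * T')) := by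
    apply (continuous_infDist_pt X).sub
    have h1 : Continuous fun c : E => c - y := continuous_id.sub continuous_const
    continuity
  have hRpos : (0:ℝ) < 2 * T' + 1 := by positivity
  obtain ⟨c₀, hc₀mem, hc₀max⟩ := (isCompact_closedBall y (2 * T' + 1)).exists_isMaxOn
    ⟨y, mem_closedBall_self hRpos.le⟩ hcont.continuousOn
  -- global maximality
  have hglob : ∀ c : E, infDist c X - ‖c - y‖ ^ 2 / (2 * T')
      ≤ infDist c₀ X - ‖c₀ - y‖ ^ 2 / (2 * T') := by
    intro c
    by_cases hcb : c ∈ closedBall y (2 * T' + 1)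
    · exact hc₀max hcb
    · have ht : 2 * T' + 1 < dist c y := by simpa [mem_closedBall] using hcb
      have h1 : infDist c X ≤ δn + dist c y := by
        have := infDist_le_infDist_add_dist (x := c) (y := y) (s := X)
        rw [hδn] at this; linarith
      have hy0 : infDist y X - ‖y - y‖ ^ 2 / (2 * T')
          ≤ infDist c₀ X - ‖c₀ - y‖ ^ 2 / (2 * T') :=
        hc₀max (mem_closedBall_self hRpos.le)
      have hy0' : δn ≤ infDist c₀ X - ‖c₀ - y‖ ^ 2 / (2 * T') := by
        simpa [hδn] using hy0
      have hd : ‖c - y‖ = dist c y := (dist_eq_norm c y).symm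
      have hq : dist c y < dist c y ^ 2 / (2 * T') := by
        rw [lt_div_iff₀ h2T]; nlinarith only [ht, h2T]
      rw [hd]; linarith only [h1, hq, hy0']
  -- names
  obtain ⟨b, hbX, hbD⟩ := hX.exists_infDist_eq_dist hXne c₀
  set D : ℝ := infDist c₀ X with hDdef
  set L : ℝ := ‖c₀ - y‖ with hLdef
  clear_value D L
  have hδnM : δn ≤ D - L ^ 2 / (2 * T') := by
    have := hglob y
    simpa [hδn] using this
  have hLR : L ≤ 2 * T' + 1 := by
    rw [hLdef, ← dist_eq_norm]; exact mem_closedBall.mp hc₀mem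
  have hD0 : 0 < D := by
    have : (0:ℝ) ≤ L ^ 2 / (2 * T') := by positivity
    linarith
  have hDL : D - δn ≤ L := by
    have := infDist_le_infDist_add_dist (x := c₀) (y := y) (s := X)
    rw [hδn, ← hDdef, dist_eq_norm, ← hLdef] at this
    linarith
  -- D < r
  have hDr : D < r := by
    by_contra hge
    push_neg at hge
    have h0 : 2 * T' < D - δn := by linarith
    have h1 : (D - δn) ^ 2 ≤ L ^ 2 := by
      apply sq_le_sq'
      · have : (0:ℝ) ≤ L := by rw [hLdef]; positivity
        linarith
      · exact hDL
    have h2 : (D - δn) ^ 2 / (2 * T') ≤ L ^ 2 / (2 * T') := by gcongr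
    have hq : D - δn < (D - δn) ^ 2 / (2 * T') := by
      rw [lt_div_iff₀ h2T]; nlinarith only [h0, h2T]
    linarith only [hδnM, h2, hq]
  -- unique nearest point at c₀
  have hbmin : ∀ a ∈ X, dist c₀ b ≤ dist c₀ a := by
    intro a ha; rw [← hbD, hDdef]; exact infDist_le_dist_of_mem ha
  have hbuniq : ∀ b', b' ∈ X → (∀ a ∈ X, dist c₀ b' ≤ dist c₀ a) → b' = b := by
    obtain ⟨u, hu, huu⟩ := huniq c₀ (by rw [← hDdef]; exact hDr)
    intro b' hb' hmin'
    rw [huu b' ⟨hb', hmin'⟩, huu b ⟨hbX, hbmin⟩]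
  have hc₀b : ‖c₀ - b‖ = D := by rw [← dist_eq_norm, ← hbD]
  have hc₀bne : c₀ - b ≠ 0 := by
    intro h
    rw [h] at hc₀b; simp at hc₀b; linarith
  set ν : E := (D⁻¹) • (c₀ - b) with hνdef
  have hν1 : ‖ν‖ = 1 := by
    rw [hνdef, norm_smul, hc₀b, Real.norm_eq_abs, abs_of_pos (by positivity)]
    field_simp
  have hDν : D • ν = c₀ - b := by
    rw [hνdef, smul_smul]
    rw [mul_inv_cancel₀ (ne_of_gt hD0), one_smul]
  set P : ℝ := inner ℝ ν (c₀ - y) with hPdef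
  clear_value P
  have hPabs : |P| ≤ L := by
    have := abs_real_inner_le_norm ν (c₀ - y)
    rw [hν1, one_mul] at this
    rw [hPdef, hLdef]; exact this
  -- TEST 1 : P ≤ T'
  have test1 : ∀ η : ℝ, 0 < η → P ≤ T' + η / 2 := by
    intro η hη
    have hdist : dist c₀ (c₀ - η • ν) = η := by
      rw [dist_eq_norm]
      simp [norm_smul, hν1, abs_of_pos hη]
    have hinf' : D - η ≤ infDist (c₀ - η • ν) X := by
      have h := infDist_le_infDist_add_dist (x := c₀) (y := c₀ - η • ν) (s := X)
      rw [← hDdef, hdist] at h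
      linarith
    have hsub : (c₀ - η • ν) - y = (c₀ - y) - η • ν := by abel
    have hnorm : ‖(c₀ - η • ν) - y‖ ^ 2 = L ^ 2 - 2 * η * P + η ^ 2 := by
      rw [hsub, norm_sub_sq_real, real_inner_smul_right, real_inner_comm, ← hPdef, ← hLdef,
          norm_smul, Real.norm_eq_abs, abs_of_pos hη, hν1]
      ring
    have hg := hglob (c₀ - η • ν)
    rw [hnorm] at hg
    have expand : (L ^ 2 - 2 * η * P + η ^ 2) / (2 * T')
        = L ^ 2 / (2 * T') - (2 * η * P - η ^ 2) / (2 * T') := by ring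
    rw [expand] at hg
    have hcomb : (2 * η * P - η ^ 2) / (2 * T') ≤ η := by linarith only [hinf', hg]
    rw [div_le_iff₀ h2T] at hcomb
    have h2η : (0:ℝ) < 2 * η := by linarith only [hη]
    have hmul : (2 * η) * P ≤ (2 * η) * (T' + η / 2) := by nlinarith only [hcomb]
    exact (mul_le_mul_iff_right₀ h2η).mp hmul
  have hP1 : P ≤ T' := by
    by_contra hc
    push_neg at hc
    have := test1 (P - T') (by linarith)
    linarith
  -- TEST 3 : L ≤ T'
  have hLT' : L ≤ T' := by
    rcases eq_or_lt_of_le (norm_nonneg (c₀ - y)) with hL0 | hL0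
    · rw [hLdef, ← hL0]; positivity
    · rw [← hLdef] at hL0
      have test3 : ∀ η : ℝ, 0 < η → η ≤ L → L ≤ T' + η / 2 := by
        intro η hη hηL
        set e : E := L⁻¹ • (c₀ - y) with hedef
        have he1 : ‖e‖ = 1 := by
          rw [hedef, norm_smul, Real.norm_eq_abs, abs_of_pos (by positivity), ← hLdef]
          field_simp
        have hdist : dist c₀ (c₀ - η • e) = η := by
          rw [dist_eq_norm]
          simp [norm_smul, he1, abs_of_pos hη]
        have hinf' : D - η ≤ infDist (c₀ - η • e) X := by
          have h := infDist_le_infDist_add_dist (x := c₀) (y := c₀ - η • e) (s := X)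
          rw [← hDdef, hdist] at h
          linarith
        have hsub : (c₀ - η • e) - y = (1 - η / L) • (c₀ - y) := by
          rw [hedef, smul_smul, sub_smul, one_smul]
          rw [div_eq_mul_inv]
          abel
        have hnorm : ‖(c₀ - η • e) - y‖ = L - η := by
          rw [hsub, norm_smul, Real.norm_eq_abs, ← hLdef,
              abs_of_nonneg (by rw [sub_nonneg, div_le_one hL0]; linarith)]
          field_simp
        have hg := hglob (c₀ - η • e)
        rw [hnorm] at hg
        have expand : ((L - η) ^ 2) / (2 * T')
            = L ^ 2 / (2 * T') - (2 * L * η - η ^ 2) / (2 * T') := by ring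
        rw [expand] at hg
        have hcomb : (2 * L * η - η ^ 2) / (2 * T') ≤ η := by linarith only [hinf', hg]
        rw [div_le_iff₀ h2T] at hcomb
        have h2η : (0:ℝ) < 2 * η := by linarith only [hη]
        have hmul : (2 * η) * L ≤ (2 * η) * (T' + η / 2) := by nlinarith only [hcomb]
        exact (mul_le_mul_iff_right₀ h2η).mp hmul
      by_contra hc
      push_neg at hc
      have hm : 0 < min L (L - T') := lt_min hL0 (by linarith)
      have := test3 (min L (L - T')) hm (min_le_left _ _)
      have h2 : min L (L - T') ≤ L - T' := min_le_right _ _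
      linarith
  -- TEST 2 : T' ≤ P
  have hP2 : T' ≤ P := by
    by_contra hPc
    push_neg at hPc
    have hTP : 0 < T' - P := by linarith
    set Eb : ℝ := D ^ 2 * (T' - P) / (2 * T') with hEbdef
    clear_value Eb
    have hEb0 : 0 < Eb := by
      rw [hEbdef]
      exact div_pos (mul_pos (pow_pos hD0 2) hTP) h2T
    obtain ⟨η₀, hη₀, hprop⟩ := proj_cont' X hX c₀ b hbuniq (Real.sqrt (Eb / 2))
      (Real.sqrt_pos.mpr (by positivity))
    set U₂ : ℝ := 1 + (2 * T' + 1) / T' + 1 / (2 * T') with hU₂def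
    clear_value U₂
    have hU₂0 : 0 < U₂ := by rw [hU₂def]; positivity
    set η : ℝ := min η₀ (min 1 (min (T' - P) (D / U₂))) with hηdef
    clear_value η
    have hη0 : 0 < η := by
      rw [hηdef]
      apply lt_min hη₀
      apply lt_min one_pos
      exact lt_min hTP (div_pos hD0 hU₂0)
    have hηη₀ : η ≤ η₀ := by rw [hηdef]; exact min_le_left _ _
    have hη1 : η ≤ 1 := by
      rw [hηdef]; exact (min_le_right _ _).trans (min_le_left _ _)
    have hηTP : η ≤ T' - P := by
      rw [hηdef]
      exact le_trans (min_le_right _ _) ((min_le_right _ _).trans (min_le_left _ _))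
    have hηDU : η ≤ D / U₂ := by
      rw [hηdef]
      exact le_trans (min_le_right _ _) ((min_le_right _ _).trans (min_le_right _ _))
    set c' : E := c₀ + η • ν with hc'def
    have hdistc' : dist c' c₀ = η := by
      rw [dist_eq_norm]
      simp [hc'def, norm_smul, hν1, abs_of_pos hη0]
    obtain ⟨b', hb'X, hb'd⟩ := hX.exists_infDist_eq_dist hXne c'
    have hbb' : dist b' b ≤ Real.sqrt (Eb / 2) :=
      hprop c' (by rw [hdistc']; exact hηη₀) b' hb'X hb'd.symm
    set m : ℝ := ‖b' - b‖ ^ 2 with hmdef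
    clear_value m
    have hm0 : 0 ≤ m := by rw [hmdef]; positivity
    have hmEb : m ≤ Eb / 2 := by
      have h1 : ‖b' - b‖ ≤ Real.sqrt (Eb / 2) := by rw [← dist_eq_norm]; exact hbb'
      have h2 : Real.sqrt (Eb / 2) * Real.sqrt (Eb / 2) = Eb / 2 :=
        Real.mul_self_sqrt (by positivity)
      have h3 := mul_self_le_mul_self (norm_nonneg (b' - b)) h1
      rw [hmdef, pow_two]
      linarith only [h2, h3]
    set W : ℝ := (inner ℝ ν (b' - b) : ℝ) with hWdef
    clear_value W
    have hWm : 2 * D * W ≤ m := by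
      have h1 : D ≤ dist c₀ b' := by rw [hDdef]; exact infDist_le_dist_of_mem hb'X
      have h2 : c₀ - b' = D • ν - (b' - b) := by rw [hDν]; abel
      have h3 : dist c₀ b' ^ 2 = D ^ 2 - 2 * D * W + m := by
        rw [dist_eq_norm, h2, norm_sub_sq_real, real_inner_smul_left, ← hWdef,
            norm_smul, Real.norm_eq_abs, abs_of_pos hD0, hν1, hmdef]
        ring
      have h4 := mul_self_le_mul_self hD0.le h1
      nlinarith only [h3, h4]
    have hcb' : c' - b' = (D + η) • ν - (b' - b) := by
      rw [hc'def, add_smul, hDν]; abel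
    have hlow : (D + η) ^ 2 - 2 * (D + η) * W + m = dist c' b' ^ 2 := by
      rw [dist_eq_norm, hcb', norm_sub_sq_real, real_inner_smul_left, ← hWdef,
          norm_smul, Real.norm_eq_abs, abs_of_pos (by linarith : (0:ℝ) < D + η), hν1, hmdef]
      ring
    have hcy' : ‖c' - y‖ ^ 2 = L ^ 2 + 2 * η * P + η ^ 2 := by
      have hsub : c' - y = (c₀ - y) + η • ν := by rw [hc'def]; abel
      rw [hsub, norm_add_sq_real, real_inner_smul_right, real_inner_comm, ← hPdef, ← hLdef,
          norm_smul, Real.norm_eq_abs, abs_of_pos hη0, hν1]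
      ring
    set Q : ℝ := D + (2 * η * P + η ^ 2) / (2 * T') with hQdef
    clear_value Q
    have hQup : dist c' b' ≤ Q := by
      have hg := hglob c'
      rw [hcy', hb'd] at hg
      have expand : (L ^ 2 + 2 * η * P + η ^ 2) / (2 * T')
          = L ^ 2 / (2 * T') + (2 * η * P + η ^ 2) / (2 * T') := by ring
      rw [expand] at hg
      rw [hQdef]
      linarith [hg]
    have hQ0 : 0 ≤ Q := le_trans dist_nonneg hQup
    have hsq : dist c' b' ^ 2 ≤ Q ^ 2 := by
      have h4 := mul_self_le_mul_self (dist_nonneg (x := c') (y := b')) hQup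
      nlinarith only [h4]
    have h4 : 2 * (D + η) * W ≤ m * (D + η) / D := by
      rw [le_div_iff₀ hD0]
      have h5 := mul_le_mul_of_nonneg_right hWm (by linarith only [hD0, hη0] : (0:ℝ) ≤ D + η)
      nlinarith only [h5]
    have hfin : (D + η) ^ 2 - η / D * m ≤ Q ^ 2 := by
      have h5 : m * (D + η) / D - m = η / D * m := by field_simp; ring
      linarith only [hsq, hlow, h4, h5]
    set f1 : ℝ := 1 - P / T' - η / (2 * T') with hf1def
    set f2 : ℝ := 2 * D + η * (1 + P / T' + η / (2 * T')) with hf2def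
    clear_value f1 f2
    have hfact : (D + η) ^ 2 - Q ^ 2 = (η * f1) * f2 := by
      rw [hQdef, hf1def, hf2def]
      field_simp
      ring
    have hf1lb : (T' - P) / (2 * T') ≤ f1 := by
      rw [hf1def]
      have h1 : η / (2 * T') ≤ (T' - P) / (2 * T') := by gcongr
      have h2 : (T' - P) / T' - (T' - P) / (2 * T') = (T' - P) / (2 * T') := by ring
      have h3 : 1 - P / T' = (T' - P) / T' := by field_simp
      linarith
    have hf1pos : 0 < (T' - P) / (2 * T') := by positivity
    have hf2lb : D ≤ f2 := by
      rw [hf2def]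
      have hPlow : -(2 * T' + 1) ≤ P := by
        have := abs_le.mp hPabs
        linarith [hLR]
      have hterm : -U₂ ≤ 1 + P / T' + η / (2 * T') := by
        rw [hU₂def]
        have h1 : (-(2 * T' + 1)) / T' ≤ P / T' := by gcongr
        have h2 : (0:ℝ) ≤ η / (2 * T') := by positivity
        have h3 : (-(2 * T' + 1)) / T' = -((2 * T' + 1) / T') := by ring
        have h4 : (0:ℝ) ≤ 1 / (2 * T') := by positivity
        linarith
      have hηU : η * U₂ ≤ D := by
        rw [div_eq_mul_inv] at hηDU
        have := mul_le_mul_of_nonneg_right hηDU (le_of_lt hU₂0)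
        rwa [mul_assoc, inv_mul_cancel₀ (ne_of_gt hU₂0), mul_one] at this
      have h6 := mul_le_mul_of_nonneg_left hterm hη0.le
      nlinarith only [h6, hηU]
    have hchain : η * ((T' - P) / (2 * T') * D) ≤ η * (f1 * f2) := by
      apply mul_le_mul_of_nonneg_left _ hη0.le
      exact mul_le_mul hf1lb hf2lb hD0.le (le_trans hf1pos.le hf1lb)
    have hchain2 : (η * f1) * f2 ≤ η / D * m := by
      rw [← hfact]
      linarith [hfin]
    have hfinal : D ^ 2 * (T' - P) / (2 * T') ≤ m := by
      have h6 : η * ((T' - P) / (2 * T') * D) ≤ η * (m / D) := by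
        have : η / D * m = η * (m / D) := by ring
        rw [this] at hchain2
        calc η * ((T' - P) / (2 * T') * D) ≤ η * (f1 * f2) := hchain
        _ = (η * f1) * f2 := by ring
        _ ≤ η * (m / D) := hchain2
      have h7 : (T' - P) / (2 * T') * D ≤ m / D := le_of_mul_le_mul_left h6 hη0
      have h8 := mul_le_mul_of_nonneg_right h7 hD0.le
      rw [div_mul_cancel₀ _ (ne_of_gt hD0)] at h8
      calc D ^ 2 * (T' - P) / (2 * T') = (T' - P) / (2 * T') * D * D := by ring
      _ ≤ m := h8
    rw [← hEbdef] at hfinal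
    linarith only [hfinal, hmEb, hEb0]
  -- equality case : c₀ - y = T' • ν
  have hPT' : P = T' := le_antisymm hP1 hP2
  have hLeq : L = T' := by
    have h1 : P ≤ L := le_trans (le_abs_self P) hPabs
    linarith only [hLT', h1, hPT'.ge, hPT'.le]
  have hkey : c₀ - y = T' • ν := by
    have h0 : ‖(c₀ - y) - T' • ν‖ ^ 2 = L ^ 2 - 2 * T' * P + T' ^ 2 := by
      rw [norm_sub_sq_real, real_inner_smul_right, real_inner_comm, ← hPdef, ← hLdef,
          norm_smul, Real.norm_eq_abs, abs_of_pos hT'pos, hν1]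
      ring
    have h1 : ‖(c₀ - y) - T' • ν‖ ^ 2 = 0 := by
      rw [h0, hLeq, hPT']; ring
    have h2 : (c₀ - y) - T' • ν = 0 := by
      have h3 : ‖(c₀ - y) - T' • ν‖ = 0 := by
        have := sq_eq_zero_iff.mp h1
        exact this
      exact norm_eq_zero.mp h3
    exact sub_eq_zero.mp h2
  -- dichotomy : T' + δn ≤ D
  have hyb : dist y b = |D - T'| := by
    have h1 : y - b = (D - T') • ν := by
      have hb' : b = c₀ - D • ν := by rw [hDν]; abel
      have hy' : y = c₀ - T' • ν := by
        have := hkey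
        rw [sub_eq_iff_eq_add] at this
        rw [this]; abel
      rw [hb', hy', sub_smul]; abel
    rw [dist_eq_norm, h1, norm_smul, Real.norm_eq_abs, hν1, mul_one]
  have hdich : δn ≤ |D - T'| := by
    rw [← hyb, ← hδn]
    exact infDist_le_dist_of_mem hbX
  have hDlb : δn + T' / 2 ≤ D := by
    have h1 : L ^ 2 / (2 * T') = T' / 2 := by
      rw [hLeq]; field_simp
    linarith only [hδnM, h1]
  have hDTδ : T' + δn ≤ D := by
    rcases abs_cases (D - T') with ⟨heq, _⟩ | ⟨heq, _⟩
    · linarith only [hdich, heq]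
    · exfalso
      rw [heq] at hdich
      linarith only [hdich, hDlb, hT'4]
  -- squeeze for the two nearest points
  have hδpos : 0 < δ := lt_of_lt_of_le hδnpos hδnδ
  have hsqz : ∀ z, z ∈ Aset → dist y z = δ →
      ‖(z - y) + δ • ν‖ ^ 2 ≤ (δ - δn) * (2 * δ + δ * (δ + δn) / T') := by
    intro z hz hdz
    have hzX : z ∈ X := hAX hz
    have hDz : D ≤ dist c₀ z := by rw [hDdef]; exact infDist_le_dist_of_mem hzX
    have hnz : ‖z - y‖ = δ := by rw [← dist_eq_norm, dist_comm, hdz]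
    have hcz : c₀ - z = T' • ν - (z - y) := by
      rw [← hkey]; abel
    have h2 : dist c₀ z ^ 2 = T' ^ 2 - 2 * T' * (inner ℝ ν (z - y) : ℝ) + δ ^ 2 := by
      rw [dist_eq_norm, hcz, norm_sub_sq_real, real_inner_smul_left,
          norm_smul, Real.norm_eq_abs, abs_of_pos hT'pos, hν1, hnz]
      ring
    have h3 : (T' + δn) ^ 2 ≤ dist c₀ z ^ 2 := by
      have h4 := mul_self_le_mul_self (by positivity : (0:ℝ) ≤ T' + δn) (le_trans hDTδ hDz)
      nlinarith only [h4]
    have h4 : 2 * T' * (inner ℝ ν (z - y) : ℝ) ≤ δ ^ 2 - δn ^ 2 - 2 * T' * δn := by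
      nlinarith only [h2, h3]
    have h5 : ‖(z - y) + δ • ν‖ ^ 2 = 2 * δ ^ 2 + 2 * δ * (inner ℝ ν (z - y) : ℝ) := by
      rw [norm_add_sq_real, real_inner_smul_right, real_inner_comm,
          norm_smul, Real.norm_eq_abs, abs_of_pos hδpos, hν1, hnz]
      ring
    have h6 : 2 * δ * (inner ℝ ν (z - y) : ℝ) ≤ δ * (δ ^ 2 - δn ^ 2 - 2 * T' * δn) / T' := by
      rw [le_div_iff₀ hT'pos]
      have h7 := mul_le_mul_of_nonneg_left h4 hδpos.le
      nlinarith only [h7]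
    have hring : (δ - δn) * (2 * δ + δ * (δ + δn) / T')
        = 2 * δ ^ 2 + δ * (δ ^ 2 - δn ^ 2 - 2 * T' * δn) / T' := by
      field_simp
      ring
    linarith only [h5, h6, hring]
  have hb1 := hsqz z₁ hz₁ hdz₁
  have hb2 := hsqz z₂ hz₂ hdz₂
  have htri : dist z₁ z₂ ≤ ‖(z₁ - y) + δ • ν‖ + ‖(z₂ - y) + δ • ν‖ := by
    have hzz : z₁ - z₂ = ((z₁ - y) + δ • ν) - ((z₂ - y) + δ • ν) := by abel
    rw [dist_eq_norm, hzz]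
    exact norm_sub_le _ _
  have hsq2 := mul_self_le_mul_self (dist_nonneg (x := z₁) (y := z₂)) htri
  nlinarith only [hb1, hb2, hsq2, sq_nonneg (‖(z₁ - y) + δ • ν‖ - ‖(z₂ - y) + δ • ν‖)]


theorem stmt_2 {d : ℕ} (A : ℕ → Set (EuclideanSpace ℝ (Fin d)))
    (hne : ∀ n, (A n).Nonempty) (hc : ∀ n, IsCompact (A n))
    (hdec : ∀ n, A (n + 1) ⊆ A n)
    (r : ℝ) (hr0 : 0 ≤ r) (hr : ∀ n, ENNReal.ofReal r ≤ reach (A n)) :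
    ENNReal.ofReal r ≤ reach (⋂ n, A n) := by
  rcases eq_or_lt_of_le hr0 with hr0' | hrpos
  · rw [← hr0', ENNReal.ofReal_zero]
    exact zero_le
  have hAcl : ∀ n, IsClosed (A n) := fun n => (hc n).isClosed
  have hAintne : (⋂ n, A n).Nonempty :=
    IsCompact.nonempty_iInter_of_sequence_nonempty_isCompact_isClosed A hdec hne (hc 0) hAcl
  have hAintcl : IsClosed (⋂ n, A n) := isClosed_iInter fun n => hAcl n
  have hAintc : IsCompact (⋂ n, A n) := (hc 0).of_isClosed_subset hAintcl (iInter_subset _ 0)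
  refine le_sSup ?_
  intro y hy
  have hyr : infDist y (⋂ n, A n) < r := (ENNReal.ofReal_lt_ofReal_iff hrpos).mp hy
  obtain ⟨z, hzA, hzd⟩ := hAintc.exists_infDist_eq_dist hAintne y
  have hzmin : ∀ a ∈ ⋂ n, A n, dist y z ≤ dist y a := by
    intro a ha
    rw [← hzd]
    exact infDist_le_dist_of_mem ha
  refine ⟨z, ⟨hzA, hzmin⟩, ?_⟩
  rintro z' ⟨hz'A, hz'min⟩
  rcases eq_or_lt_of_le (infDist_nonneg (s := ⋂ n, A n) (x := y)) with h0 | hδpos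
  · -- distance zero : y itself belongs to the intersection
    have hyA : y ∈ ⋂ n, A n := (hAintcl.mem_iff_infDist_zero hAintne).mpr h0.symm
    have h1 : dist y z' ≤ 0 := by simpa using hz'min y hyA
    have h2 : dist y z ≤ 0 := by simpa using hzmin y hyA
    have h1' : z' = y := by
      have := le_antisymm h1 dist_nonneg
      rw [dist_comm] at this
      exact dist_eq_zero.mp this
    have h2' : z = y := by
      have := le_antisymm h2 dist_nonneg
      rw [dist_comm] at this
      exact dist_eq_zero.mp this
    rw [h1', h2']
  · -- main case : positive distance
    set δ : ℝ := infDist y (⋂ n, A n) with hδdef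
    clear_value δ
    have hδr : δ < r := hyr
    have hdzy : dist y z = δ := hzd.symm
    have hdz'y : dist y z' = δ := by
      apply le_antisymm
      · rw [← hdzy]; exact hz'min z hzA
      · rw [hδdef]; exact infDist_le_dist_of_mem hz'A
    set T' : ℝ := min δ ((r - δ) / 4) with hT'def
    clear_value T'
    have hT'pos : 0 < T' := by
      rw [hT'def]
      exact lt_min hδpos (by linarith)
    have hT'δ : T' ≤ δ := by rw [hT'def]; exact min_le_left _ _
    have hT'r4 : T' ≤ (r - δ) / 4 := by rw [hT'def]; exact min_le_right _ _
    have hK1 : 0 < 2 * δ + 2 * δ ^ 2 / T' := by positivity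
    set K₁ : ℝ := 2 * δ + 2 * δ ^ 2 / T' with hK₁def
    clear_value K₁
    have hK₁pos : 0 < K₁ := hK1
    have hdd : ∀ ε : ℝ, 0 < ε → dist z' z ^ 2 ≤ ε := by
      intro ε hε
      have hε'pos : 0 < min (ε / (4 * K₁)) (δ / 2) := by
        apply lt_min
        · positivity
        · linarith
      obtain ⟨n, hn⟩ := sup_infDist A hc hne hdec y (min (ε / (4 * K₁)) (δ / 2)) hε'pos
      rw [← hδdef] at hn
      set δn : ℝ := infDist y (A n) with hδndef
      have hδnδ : δn ≤ δ := by
        rw [hδndef, hδdef]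
        exact infDist_le_infDist_of_subset (iInter_subset A n) hAintne
      have hδn2 : δ / 2 < δn := by
        have h1 : min (ε / (4 * K₁)) (δ / 2) ≤ δ / 2 := min_le_right _ _
        linarith
      have hδnpos : 0 < δn := by linarith
      have hT'4 : T' < 4 * δn := by linarith
      have hT'r : 2 * T' < r - δn := by linarith
      have huniqn : ∀ c : EuclideanSpace ℝ (Fin d), infDist c (A n) < r →
          ∃! b, b ∈ A n ∧ ∀ a ∈ A n, dist c b ≤ dist c a := by
        intro c hcr
        have h2 : ENNReal.ofReal (infDist c (A n)) < reach (A n) :=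
          lt_of_lt_of_le ((ENNReal.ofReal_lt_ofReal_iff hrpos).mpr hcr) (hr n)
        rw [reach] at h2
        obtain ⟨s, hs, hlt⟩ := lt_sSup_iff.mp h2
        exact hs c hlt
      have hbound := key (A n) (⋂ m, A m) (hc n) (hne n) (iInter_subset A n)
        r δ δn T' y z' z hδndef.symm hδnpos hδnδ hT'pos hT'4 hT'r huniqn
        hz'A hzA hdz'y hdzy
      have hfac1 : δ - δn ≤ min (ε / (4 * K₁)) (δ / 2) := by linarith
      have hfac2 : 2 * δ + δ * (δ + δn) / T' ≤ K₁ := by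
        rw [hK₁def]
        have h1 : δ * (δ + δn) ≤ 2 * δ ^ 2 := by nlinarith only [hδnδ, hδpos]
        have h2 : δ * (δ + δn) / T' ≤ 2 * δ ^ 2 / T' := by gcongr
        linarith
      have hfac3 : (δ - δn) * (2 * δ + δ * (δ + δn) / T') ≤ (ε / (4 * K₁)) * K₁ := by
        apply mul_le_mul
        · exact le_trans hfac1 (min_le_left _ _)
        · exact hfac2
        · positivity
        · positivity
      have hfac4 : (ε / (4 * K₁)) * K₁ = ε / 4 := by
        field_simp
      rw [hfac4] at hfac3
      linarith
    have hzz : dist z' z = 0 := by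
      by_contra hne'
      have h1 : 0 < dist z' z := lt_of_le_of_ne dist_nonneg (Ne.symm hne')
      have h2 : 0 < dist z' z ^ 2 / 2 := by positivity
      have := hdd (dist z' z ^ 2 / 2) h2
      nlinarith only [this, h1]
    exact dist_eq_zero.mp hzz
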